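/- For every probability measure μ on ℤ there exists an a.s. finite stopping time τ with respect to the natural filtration (F_n) of the simple symmetric random walk (X_n) such that X_τ has law μ. -/

import Mathlib

open MeasureTheory ProbabilityTheory Filter Set
open scoped ENNReal NNReal Topology

noncomputable section

namespace RWSkorokhod

variable {Ω : Type*} [MeasurableSpace Ω]

/-- The simple symmetric random walk `X n = ξ 1 + ⋯ + ξ n` built from the steps `ξ`. -/
def walk (ξ : ℕ → Ω → ℤ) (n : ℕ) (ω : Ω) : ℤ :=
  ∑ k ∈ Finset.Icc 1 n, ξ k ω

/-- `ξ` is a sequence of i.i.d. symmetric `±1` steps under the probability measure `P`. -/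
structure IsSSRW (P : Measure Ω) (ξ : ℕ → Ω → ℤ) : Prop where
  isProb : IsProbabilityMeasure P
  meas : ∀ k, Measurable (ξ k)
  indep : iIndepFun ξ P
  up : ∀ k, P {ω | ξ k ω = 1} = 1 / 2
  down : ∀ k, P {ω | ξ k ω = -1} = 1 / 2

lemma measurable_walk (ξ : ℕ → Ω → ℤ) (hm : ∀ k, Measurable (ξ k)) (n : ℕ) :
    Measurable (walk ξ n) :=
  Finset.measurable_sum _ fun k _ => hm k

/-- The natural filtration of the random walk: `F n = σ(X 0, …, X n)`. -/
def natFilt (ξ : ℕ → Ω → ℤ) (hm : ∀ k, Measurable (ξ k)) :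
    Filtration ℕ ‹MeasurableSpace Ω› where
  seq n := ⨆ k ∈ Set.Iic n, MeasurableSpace.comap (walk ξ k) inferInstance
  mono' i _ hij := biSup_mono fun k (hk : k ∈ Set.Iic i) => le_trans hk hij
  le' _ := iSup₂_le fun k _ => (measurable_walk ξ hm k).comap_le

/-- `τ` is an (extended-natural-number valued) stopping time for the filtration `F`. -/
def IsStop (F : Filtration ℕ ‹MeasurableSpace Ω›) (τ : Ω → ℕ∞) : Prop :=
  ∀ n : ℕ, MeasurableSet[F n] {ω | τ ω ≤ (n : ℕ∞)}

/-- `τ` is almost surely finite. -/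
def AEFinite (P : Measure Ω) (τ : Ω → ℕ∞) : Prop :=
  ∀ᵐ ω ∂P, τ ω < ⊤

/-- The value `X_τ` of the walk at the stopping time `τ` (junk on `{τ = ∞}`). -/
def stopVal (ξ : ℕ → Ω → ℤ) (τ : Ω → ℕ∞) (ω : Ω) : ℤ :=
  walk ξ (τ ω).toNat ω

/-- The stopped process `X_{n ∧ τ}`, viewed as a real-valued process. -/
def stopProc (ξ : ℕ → Ω → ℤ) (τ : Ω → ℕ∞) (n : ℕ) (ω : Ω) : ℝ :=
  ((walk ξ (min (n : ℕ∞) (τ ω)).toNat ω : ℤ) : ℝ)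

/-- `τ` embeds the measure `μ` : the law of `X_τ` under `P` is `μ`. -/
def Embeds (P : Measure Ω) (ξ : ℕ → Ω → ℤ) (τ : Ω → ℕ∞) (μ : Measure ℤ) : Prop :=
  Measure.map (stopVal ξ τ) P = μ

/-- `τ` is a UI stopping time: an a.s. finite stopping time of the natural filtration such
that the stopped process `(X_{n ∧ τ})` is a uniformly integrable martingale. -/
def IsUIStop (P : Measure Ω) (ξ : ℕ → Ω → ℤ) (hm : ∀ k, Measurable (ξ k))
    (τ : Ω → ℕ∞) : Prop :=
  IsStop (natFilt ξ hm) τ ∧ AEFinite P τ ∧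
    Martingale (stopProc ξ τ) (natFilt ξ hm) P ∧
    UniformIntegrable (stopProc ξ τ) 1 P

/-- The set `M₀^UI` of probability measures on `ℤ` which can be embedded in the random
walk by a UI stopping time of its natural filtration. -/
def MUI (P : Measure Ω) (ξ : ℕ → Ω → ℤ) (hm : ∀ k, Measurable (ξ k)) : Set (Measure ℤ) :=
  {μ | ∃ τ : Ω → ℕ∞, IsUIStop P ξ hm τ ∧ Embeds P ξ τ μ}

/-- A centered probability measure on `ℤ`: finite first moment and mean zero. -/
def Centered (μ : Measure ℤ) : Prop :=
  IsProbabilityMeasure μ ∧ Integrable (fun n : ℤ => (n : ℝ)) μ ∧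
    (∫ n : ℤ, (n : ℝ) ∂μ) = 0

/-- `τ` is a minimal stopping time: any stopping time `σ ≤ τ` a.s. with `X_σ ∼ X_τ`
equals `τ` a.s. -/
def Minimal (P : Measure Ω) (ξ : ℕ → Ω → ℤ) (hm : ∀ k, Measurable (ξ k))
    (τ : Ω → ℕ∞) : Prop :=
  ∀ σ : Ω → ℕ∞, IsStop (natFilt ξ hm) σ → (∀ᵐ ω ∂P, σ ω ≤ τ ω) →
    Measure.map (stopVal ξ σ) P = Measure.map (stopVal ξ τ) P → σ =ᵐ[P] τ

/-- The measure `μ_p = p δ₀ + ((1-p)/2)(δ₋₂ + δ₂)` on `ℤ`. -/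
def muP (p : ℝ) : Measure ℤ :=
  ENNReal.ofReal p • Measure.dirac 0 +
    ENNReal.ofReal ((1 - p) / 2) • (Measure.dirac (-2) + Measure.dirac 2)

/-- The set `S` of `p ∈ [0,1]` such that `μ_p` admits a UI embedding. -/
def Sset (P : Measure Ω) (ξ : ℕ → Ω → ℤ) (hm : ∀ k, Measurable (ξ k)) : Set ℝ :=
  {p | p ∈ Set.Icc (0 : ℝ) 1 ∧ muP p ∈ MUI P ξ hm}

/-- The exit time `H_N = inf {n : X n ∉ [-N, N]}`. -/
def exitTime (ξ : ℕ → Ω → ℤ) (N : ℕ) (ω : Ω) : ℕ∞ :=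
  ⨅ (n : ℕ) (_ : walk ξ n ω ∉ Set.Icc (-(N : ℤ)) (N : ℤ)), (n : ℕ∞)


section Basic

variable {P : Measure Ω} {ξ : ℕ → Ω → ℤ}

lemma walk_zero (ξ : ℕ → Ω → ℤ) (ω : Ω) : walk ξ 0 ω = 0 := by
  simp [walk]

lemma walk_succ (ξ : ℕ → Ω → ℤ) (n : ℕ) (ω : Ω) :
    walk ξ (n + 1) ω = walk ξ n ω + ξ (n + 1) ω := by
  rw [walk, walk, Finset.sum_Icc_succ_top (by omega : 1 ≤ n + 1)]

lemma walk_eq_range (ξ : ℕ → Ω → ℤ) (n : ℕ) (ω : Ω) :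
    walk ξ n ω = ∑ k ∈ Finset.range n, ξ (k + 1) ω := by
  induction n with
  | zero => simp [walk_zero]
  | succ n ih => rw [walk_succ, Finset.sum_range_succ, ih]

/-- a.e., all steps are ±1. -/
lemma ae_pm (W : IsSSRW P ξ) : ∀ᵐ ω ∂P, ∀ k : ℕ, ξ (k + 1) ω = 1 ∨ ξ (k + 1) ω = -1 := by
  haveI := W.isProb
  rw [ae_all_iff]
  intro k
  have h1 : MeasurableSet {ω | ξ (k+1) ω = 1} := (W.meas (k+1)) (measurableSet_singleton 1)
  have h2 : MeasurableSet {ω | ξ (k+1) ω = -1} := (W.meas (k+1)) (measurableSet_singleton (-1))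
  have hd : Disjoint {ω | ξ (k+1) ω = 1} {ω | ξ (k+1) ω = -1} := by
    rw [Set.disjoint_left]; intro ω hω1 hω2; simp only [Set.mem_setOf_eq] at hω1 hω2; omega
  have hu : P ({ω | ξ (k+1) ω = 1} ∪ {ω | ξ (k+1) ω = -1}) = 1 := by
    rw [measure_union hd h2, W.up, W.down]
    rw [ENNReal.div_add_div_same]
    rw [(by norm_num : (1:ℝ≥0∞) + 1 = 2)]
    exact ENNReal.div_self two_ne_zero ENNReal.ofNat_ne_top
  have := prob_compl_eq_zero_iff (μ := P) (h1.union h2) |>.mpr hu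
  filter_upwards [measure_eq_zero_iff_ae_notMem.mp this] with ω hω
  rw [Set.notMem_compl_iff] at hω
  simpa using hω

lemma abs_walk_le {ω : Ω} (hω : ∀ k : ℕ, ξ (k + 1) ω = 1 ∨ ξ (k + 1) ω = -1) (n : ℕ) :
    |walk ξ n ω| ≤ (n : ℤ) := by
  induction n with
  | zero => simp [walk_zero]
  | succ n ih =>
    rw [walk_succ]
    have h1 := abs_add_le (walk ξ n ω) (ξ (n+1) ω)
    have h2 : |ξ (n+1) ω| = 1 := by
      rcases hω n with h | h <;> simp [h]
    push_cast
    omega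

/-- The walk at time `k` is measurable w.r.t. `F n` for `k ≤ n`. -/
lemma walk_meas_filt (hm : ∀ k, Measurable (ξ k)) {k n : ℕ} (hk : k ≤ n) :
    Measurable[natFilt ξ hm n] (walk ξ k) := by
  have : MeasurableSpace.comap (walk ξ k) inferInstance ≤ natFilt ξ hm n := by
    refine le_trans ?_ le_rfl
    exact le_biSup (fun j => MeasurableSpace.comap (walk ξ j) inferInstance) (by exact hk)
  exact fun s hs => this _ ⟨s, hs, rfl⟩

lemma xi_meas_filt (hm : ∀ k, Measurable (ξ k)) {k n : ℕ} (hk1 : 1 ≤ k) (hkn : k ≤ n) :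
    Measurable[natFilt ξ hm n] (ξ k) := by
  obtain ⟨m, rfl⟩ : ∃ m, k = m + 1 := ⟨k - 1, by omega⟩
  have h : ξ (m+1) = fun ω => walk ξ (m+1) ω - walk ξ m ω := by
    funext ω; rw [walk_succ]; ring
  rw [h]
  exact (walk_meas_filt hm hkn).sub (walk_meas_filt hm (by omega))

end Basic

section Indep

variable {P : Measure Ω} {ξ : ℕ → Ω → ℤ}

lemma meas_cast_comap (hm : ∀ k, Measurable (ξ k)) (k : ℕ) :
    Measurable[MeasurableSpace.comap (ξ k) inferInstance] fun ω => ((ξ k ω : ℤ) : ℝ) :=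
  measurable_from_top.comp (Measurable.of_comap_le le_rfl)

lemma natFilt_le_sup (hm : ∀ k, Measurable (ξ k)) (n : ℕ) :
    natFilt ξ hm n ≤ ⨆ i ∈ Set.Iic n, MeasurableSpace.comap (ξ i) inferInstance := by
  refine iSup₂_le fun k hk => ?_
  simp only [Set.mem_Iic] at hk
  rw [← measurable_iff_comap_le]
  refine Finset.measurable_sum _ fun i hi => ?_
  rw [measurable_iff_comap_le]
  refine le_trans ?_ (le_biSup _ (show i ∈ Set.Iic n by
    simp only [Finset.mem_Icc] at hi; simp only [Set.mem_Iic]; omega))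
  exact le_rfl

lemma indep_step (W : IsSSRW P ξ) (n : ℕ) :
    Indep (MeasurableSpace.comap (ξ (n + 1)) inferInstance) (natFilt ξ W.meas n) P := by
  haveI := W.isProb
  have h := indep_iSup_of_disjoint
    (m := fun i => MeasurableSpace.comap (ξ i) inferInstance)
    (fun i => (W.meas i).comap_le) W.indep.iIndep
    (S := {n + 1}) (T := Set.Iic n)
    (by simp [Set.disjoint_left])
  have h1 : (⨆ i ∈ ({n + 1} : Set ℕ), MeasurableSpace.comap (ξ i) inferInstance)
      = MeasurableSpace.comap (ξ (n + 1)) inferInstance := by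
    simp
  rw [h1] at h
  exact indep_of_indep_of_le_right h (natFilt_le_sup W.meas n)

lemma indep_sup_step (W : IsSSRW P ξ) (n : ℕ) :
    Indep (⨆ i ∈ Set.Iic n, MeasurableSpace.comap (ξ i) inferInstance)
      (MeasurableSpace.comap (ξ (n + 1)) inferInstance) P := by
  haveI := W.isProb
  have h := indep_iSup_of_disjoint
    (m := fun i => MeasurableSpace.comap (ξ i) inferInstance)
    (fun i => (W.meas i).comap_le) W.indep.iIndep
    (S := Set.Iic n) (T := {n + 1})
    (by simp only [Set.disjoint_left, Set.mem_Iic, Set.mem_singleton_iff]; omega)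
  have h1 : (⨆ i ∈ ({n + 1} : Set ℕ), MeasurableSpace.comap (ξ i) inferInstance)
      = MeasurableSpace.comap (ξ (n + 1)) inferInstance := by simp
  rwa [h1] at h

lemma integral_xi (W : IsSSRW P ξ) (k : ℕ) :
    ∫ ω, ((ξ (k + 1) ω : ℤ) : ℝ) ∂P = 0 := by
  haveI := W.isProb
  have h1 : MeasurableSet {ω | ξ (k+1) ω = 1} := (W.meas (k+1)) (measurableSet_singleton 1)
  have h2 : MeasurableSet {ω | ξ (k+1) ω = -1} := (W.meas (k+1)) (measurableSet_singleton (-1))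
  have hae : (fun ω => ((ξ (k+1) ω : ℤ) : ℝ)) =ᵐ[P]
      fun ω => Set.indicator {ω | ξ (k+1) ω = 1} (fun _ => (1:ℝ)) ω
        - Set.indicator {ω | ξ (k+1) ω = -1} (fun _ => (1:ℝ)) ω := by
    filter_upwards [ae_pm W] with ω hω
    rcases hω k with h | h <;>
      simp [Set.indicator_apply, Set.mem_setOf_eq, h]
  rw [integral_congr_ae hae, integral_sub, integral_indicator_const _ h1,
    integral_indicator_const _ h2, measureReal_def, measureReal_def, W.up, W.down]
  · ring
  · exact (integrable_const (1:ℝ)).indicator h1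
  · exact (integrable_const (1:ℝ)).indicator h2

lemma condexp_xi (W : IsSSRW P ξ) (n : ℕ) :
    P[(fun ω => ((ξ (n + 1) ω : ℤ) : ℝ)) | natFilt ξ W.meas n] =ᵐ[P] 0 := by
  haveI := W.isProb
  have h := condExp_indep_eq (μ := P)
    ((W.meas (n+1)).comap_le) ((natFilt ξ W.meas).le n)
    (meas_cast_comap W.meas (n+1)).stronglyMeasurable (indep_step W n)
  rw [integral_xi W n] at h
  exact h

end Indep

section Hitting

variable {P : Measure Ω} {ξ : ℕ → Ω → ℤ}

/-- Discrete intermediate value theorem, increasing version. -/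
lemma int_ivt (g : ℕ → ℤ) (hstep : ∀ k, g (k+1) = g k + 1 ∨ g (k+1) = g k - 1) (z : ℤ) :
    ∀ b a, a ≤ b → g a ≤ z → z ≤ g b → ∃ k, a ≤ k ∧ k ≤ b ∧ g k = z := by
  intro b
  induction b with
  | zero =>
    intro a hab h1 h2
    have ha : a = 0 := Nat.le_zero.mp hab
    subst ha
    exact ⟨0, le_rfl, le_rfl, le_antisymm h1 h2⟩
  | succ b ih =>
    intro a hab h1 h2
    rcases Nat.lt_or_ge a (b+1) with h | h
    · rcases le_or_gt z (g b) with hzb | hzb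
      · obtain ⟨k, hk1, hk2, hk3⟩ := ih a (by omega) h1 hzb
        exact ⟨k, hk1, by omega, hk3⟩
      · refine ⟨b+1, by omega, le_rfl, ?_⟩
        rcases hstep b with h' | h' <;> omega
    · have ha : a = b + 1 := by omega
      subst ha
      exact ⟨b + 1, le_rfl, le_rfl, le_antisymm h1 h2⟩

/-- Discrete intermediate value theorem, decreasing version. -/
lemma int_ivt' (g : ℕ → ℤ) (hstep : ∀ k, g (k+1) = g k + 1 ∨ g (k+1) = g k - 1) (z : ℤ)
    (b a : ℕ) (hab : a ≤ b) (h1 : z ≤ g a) (h2 : g b ≤ z) :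
    ∃ k, a ≤ k ∧ k ≤ b ∧ g k = z := by
  have hstep' : ∀ k, -g (k+1) = -g k + 1 ∨ -g (k+1) = -g k - 1 := by
    intro k; rcases hstep k with h | h <;> omega
  obtain ⟨k, hk1, hk2, hk3⟩ := int_ivt (fun n => -g n) hstep' (-z) b a hab
    (show -g a ≤ -z by omega) (show -z ≤ -g b by omega)
  have hk3' : -g k = -z := hk3
  exact ⟨k, hk1, hk2, by omega⟩

/-- The walk a.s. hits any negative level. -/
lemma hit_neg_ae (W : IsSSRW P ξ) {z : ℤ} (hz : z < 0) :
    ∀ᵐ ω ∂P, ∃ n, walk ξ n ω = z := by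
  haveI := W.isProb
  set F := natFilt ξ W.meas with hF
  set A : ℕ → Set Ω := fun n => {ω | ∀ j ≤ n, walk ξ j ω ≠ z} with hA
  have hAmeas : ∀ n, MeasurableSet[F n] (A n) := by
    intro n
    have hset : A n = ⋂ j ∈ Set.Iic n, {ω | walk ξ j ω = z}ᶜ := by
      ext ω
      simp only [hA, Set.mem_setOf_eq, Set.mem_iInter, Set.mem_Iic, Set.mem_compl_iff]
    rw [hset]
    refine MeasurableSet.biInter (Set.to_countable _) fun j hj => ?_
    exact ((walk_meas_filt W.meas hj) (measurableSet_singleton z)).compl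
  set T : ℕ → Ω → ℝ := fun k ω =>
    Set.indicator (A k) (fun _ => (1:ℝ)) ω * ((ξ (k+1) ω : ℤ) : ℝ) with hT
  set Y : ℕ → Ω → ℝ := fun n ω => ∑ k ∈ Finset.range n, T k ω with hY
  have hTmeas : ∀ {k n : ℕ}, k < n → Measurable[F n] (T k) := by
    intro k n hk
    have h1 : MeasurableSet[F n] (A k) := (F.mono hk.le) _ (hAmeas k)
    have h2 : Measurable[F n] fun ω => ((ξ (k+1) ω : ℤ) : ℝ) :=
      measurable_from_top.comp (xi_meas_filt W.meas (by omega) (by omega))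
    exact ((measurable_const.indicator h1).mul h2)
  have hTbdd : ∀ᵐ ω ∂P, ∀ k, |T k ω| ≤ 1 := by
    filter_upwards [ae_pm W] with ω hω k
    have h2 : |((ξ (k+1) ω : ℤ) : ℝ)| = 1 := by rcases hω k with h | h <;> simp [h]
    by_cases h : ω ∈ A k
    · simp [hT, Set.indicator_of_mem h, h2]
    · simp [hT, Set.indicator_of_notMem h]
  have hTint : ∀ k, Integrable (T k) P := by
    intro k
    refine Integrable.mono' (integrable_const (1:ℝ)) ?_ ?_
    · exact (((hTmeas (Nat.lt_succ_self k)).mono (F.le (k+1)) le_rfl).stronglyMeasurable).aestronglyMeasurable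
    · filter_upwards [hTbdd] with ω hω using by simpa [Real.norm_eq_abs] using hω k
  have hYadp : StronglyAdapted F Y := by
    intro n
    refine Finset.stronglyMeasurable_fun_sum _ fun k hk => ?_
    simp only [Finset.mem_range] at hk
    exact (hTmeas hk).stronglyMeasurable
  have hYint : ∀ n, Integrable (Y n) P := fun n => integrable_finset_sum _ fun k _ => hTint k
  -- conditional expectation of each increment is zero
  have hTcond : ∀ k, P[T k | F k] =ᵐ[P] 0 := by
    intro k
    have hpull := condExp_mul_of_stronglyMeasurable_left (μ := P) (m := F k)
      (measurable_const.indicator (hAmeas k)).stronglyMeasurable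
      (by
        have : (Set.indicator (A k) (fun _ => (1:ℝ)) * fun ω => ((ξ (k+1) ω : ℤ) : ℝ)) = T k := by
          funext ω; simp [hT]
        rw [this]; exact hTint k)
      (by
        refine Integrable.mono' (integrable_const (1:ℝ))
          (((meas_cast_comap W.meas (k+1)).mono ((W.meas (k+1)).comap_le) le_rfl).stronglyMeasurable).aestronglyMeasurable ?_
        filter_upwards [ae_pm W] with ω hω
        rcases hω k with h | h <;> simp [h])
    have heq : (Set.indicator (A k) (fun _ => (1:ℝ)) * fun ω => ((ξ (k+1) ω : ℤ) : ℝ)) = T k := by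
      funext ω; simp [hT]
    rw [heq] at hpull
    refine hpull.trans ?_
    filter_upwards [condexp_xi W k] with ω hω
    simp only [Pi.mul_apply, hF, hω, Pi.zero_apply, mul_zero]
  have hstep : ∀ n, Y n =ᵐ[P] P[Y (n+1) | F n] := by
    intro n
    have hsucc : Y (n+1) = Y n + T n := by
      funext ω; simp only [hY, Finset.sum_range_succ]; rfl
    rw [hsucc]
    have h1 := condExp_add (μ := P) (m := F n) (hYint n) (hTint n)
    refine EventuallyEq.symm (h1.trans ?_)
    have h2 : P[Y n | F n] = Y n :=
      condExp_of_stronglyMeasurable (F.le n) (hYadp n) (hYint n)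
    have h3 : P[T n | F n] =ᵐ[P] 0 := hTcond n
    filter_upwards [h3] with ω hω
    simp [h2, hω]
  have hmart : Martingale Y F P := martingale_nat hYadp hYint hstep
  -- key pathwise facts
  have key : ∀ᵐ ω ∂P, ∀ n, (z:ℝ) ≤ Y n ω ∧ (ω ∈ A n → Y n ω = ((walk ξ n ω : ℤ) : ℝ)) := by
    filter_upwards [ae_pm W] with ω hω
    intro n
    induction n with
    | zero =>
      constructor
      · simp only [hY, Finset.range_zero, Finset.sum_empty]
        exact_mod_cast hz.le
      · intro _
        simp [hY, walk_zero]
    | succ n ih =>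
      have hY1 : Y (n+1) ω = Y n ω + T n ω := by
        simp only [hY, Finset.sum_range_succ]
      by_cases hAn : ω ∈ A n
      · have hw : Y n ω = ((walk ξ n ω : ℤ) : ℝ) := ih.2 hAn
        have hwz : walk ξ n ω ≠ z := hAn n le_rfl
        have hzw : z ≤ walk ξ n ω := by
          have := ih.1
          rw [hw] at this
          exact_mod_cast this
        have hzw' : z + 1 ≤ walk ξ n ω := by omega
        have hTn : T n ω = ((ξ (n+1) ω : ℤ) : ℝ) := by
          simp [hT, Set.indicator_of_mem hAn]
        constructor
        · rw [hY1, hw, hTn]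
          rcases hω n with h | h <;> rw [h] <;> push_cast <;>
            [skip; skip] <;>
            · have : ((z:ℝ) + 1) ≤ ((walk ξ n ω : ℤ) : ℝ) := by exact_mod_cast hzw'
              push_cast at this ⊢
              linarith
        · intro _
          rw [hY1, hw, hTn, walk_succ]
          push_cast
          ring
      · have hTn : T n ω = 0 := by
          simp [hT, Set.indicator_of_notMem hAn]
        constructor
        · rw [hY1, hTn, add_zero]; exact ih.1
        · intro hAn1
          exact absurd (fun j hj => hAn1 j (by omega)) hAn
  -- L¹ bound
  have hEY : ∀ n, ∫ ω, Y n ω ∂P = 0 := by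
    intro n
    rw [integral_finset_sum _ fun k _ => hTint k]
    refine Finset.sum_eq_zero fun k _ => ?_
    rw [← integral_condExp (F.le k) (f := T k), integral_congr_ae (hTcond k)]
    simp
  have habs : ∀ n, ∫ ω, |Y n ω| ∂P ≤ -2 * (z:ℝ) := by
    intro n
    have hmono : ∫ ω, |Y n ω| ∂P ≤ ∫ ω, (Y n ω - 2 * (z:ℝ)) ∂P := by
      refine integral_mono_ae (hYint n).abs ((hYint n).sub (integrable_const _)) ?_
      filter_upwards [key] with ω hω
      have h1 := (hω n).1
      have hzneg : (z:ℝ) < 0 := by exact_mod_cast hz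
      rw [abs_le]
      constructor <;> linarith
    calc ∫ ω, |Y n ω| ∂P ≤ ∫ ω, (Y n ω - 2 * (z:ℝ)) ∂P := hmono
      _ = ∫ ω, Y n ω ∂P - ∫ _ω, (2 * (z:ℝ)) ∂P := integral_sub (hYint n) (integrable_const _)
      _ = -2 * (z:ℝ) := by
          rw [hEY n, integral_const]
          simp only [probReal_univ, one_smul]
          ring
  have hbdd : ∀ n, eLpNorm (Y n) 1 P ≤ ENNReal.ofReal (-2 * (z:ℝ)) := by
    intro n
    rw [eLpNorm_one_eq_lintegral_enorm, ← ofReal_integral_norm_eq_lintegral_enorm (hYint n)]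
    refine ENNReal.ofReal_le_ofReal ?_
    simpa [Real.norm_eq_abs] using habs n
  have hconv := hmart.submartingale.ae_tendsto_limitProcess hbdd
  -- conclusion
  filter_upwards [hconv, key, ae_pm W] with ω hc hk hpm
  by_contra hno
  push_neg at hno
  have hAall : ∀ n, ω ∈ A n := fun n j _ => hno j
  have hYw : ∀ n, Y n ω = ((walk ξ n ω : ℤ) : ℝ) := fun n => (hk n).2 (hAall n)
  have hcauchy : CauchySeq fun n => Y n ω := hc.cauchySeq
  rw [Metric.cauchySeq_iff'] at hcauchy
  obtain ⟨N, hN⟩ := hcauchy (1/2) (by norm_num)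
  have h1 := hN (N+1) (by omega)
  rw [Real.dist_eq, hYw (N+1), hYw N] at h1
  have h2 : ((walk ξ (N+1) ω : ℤ) : ℝ) - ((walk ξ N ω : ℤ) : ℝ) = ((ξ (N+1) ω : ℤ) : ℝ) := by
    rw [walk_succ]; push_cast; ring
  rw [h2] at h1
  rcases hpm N with h | h <;> rw [h] at h1 <;> norm_num at h1

lemma neg_ssrw (W : IsSSRW P ξ) : IsSSRW P (fun k => -(ξ k)) where
  isProb := W.isProb
  meas := fun k => (W.meas k).neg
  indep := by
    have := W.indep.comp (fun _ => (Neg.neg : ℤ → ℤ)) (fun _ => measurable_neg)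
    exact this
  up := fun k => by
    have hs : {ω | (-(ξ k)) ω = 1} = {ω | ξ k ω = -1} := by
      ext ω; simp only [Pi.neg_apply, Set.mem_setOf_eq]; omega
    rw [hs]; exact W.down k
  down := fun k => by
    have hs : {ω | (-(ξ k)) ω = -1} = {ω | ξ k ω = 1} := by
      ext ω; simp only [Pi.neg_apply, Set.mem_setOf_eq]; omega
    rw [hs]; exact W.up k

lemma walk_neg (ξ : ℕ → Ω → ℤ) (n : ℕ) (ω : Ω) :
    walk (fun k => -(ξ k)) n ω = -(walk ξ n ω) := by
  simp [walk, Finset.sum_neg_distrib]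

/-- The walk a.s. hits any level. -/
lemma hit_ae (W : IsSSRW P ξ) (z : ℤ) : ∀ᵐ ω ∂P, ∃ n, walk ξ n ω = z := by
  haveI := W.isProb
  rcases lt_trichotomy z 0 with h | h | h
  · exact hit_neg_ae W h
  · exact ae_of_all _ fun ω => ⟨0, by rw [walk_zero, h]⟩
  · have := hit_neg_ae (neg_ssrw W) (z := -z) (by omega)
    filter_upwards [this] with ω ⟨n, hn⟩
    rw [walk_neg] at hn
    exact ⟨n, by omega⟩

/-- Recurrence: a.s. the walk visits every integer at arbitrarily late times. -/
lemma recurrent (W : IsSSRW P ξ) :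
    ∀ᵐ ω ∂P, ∀ m : ℕ, ∀ z : ℤ, ∃ n, m ≤ n ∧ walk ξ n ω = z := by
  haveI := W.isProb
  have hall : ∀ᵐ ω ∂P, ∀ z : ℤ, ∃ n, walk ξ n ω = z := ae_all_iff.mpr (hit_ae W)
  filter_upwards [hall, ae_pm W] with ω hz hpm
  intro m z
  have hstep : ∀ k, walk ξ (k+1) ω = walk ξ k ω + 1 ∨ walk ξ (k+1) ω = walk ξ k ω - 1 := by
    intro k
    rcases hpm k with h | h <;> rw [walk_succ, h] <;> [left; right] <;> ring
  obtain ⟨n1, hn1⟩ := hz (max z 0 + m)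
  obtain ⟨n2, hn2⟩ := hz (min z 0 - m)
  have hb1 := abs_walk_le hpm n1
  have hb2 := abs_walk_le hpm n2
  rw [hn1] at hb1
  rw [hn2] at hb2
  have hmax1 : z ≤ max z 0 := le_max_left _ _
  have hmax2 : (0:ℤ) ≤ max z 0 := le_max_right _ _
  have hmin1 : min z 0 ≤ z := min_le_left _ _
  have hmin2 : min z 0 ≤ 0 := min_le_right _ _
  have habs1 : max z 0 + (m:ℤ) ≤ |max z 0 + (m:ℤ)| := le_abs_self _
  have habs2 : -|min z 0 - (m:ℤ)| ≤ min z 0 - (m:ℤ) := neg_abs_le _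
  have hm1 : m ≤ n1 := by omega
  have hm2 : m ≤ n2 := by omega
  have hz1 : z ≤ walk ξ n1 ω := by omega
  have hz2 : walk ξ n2 ω ≤ z := by omega
  rcases le_total n1 n2 with h | h
  · obtain ⟨k, hk1, _, hk3⟩ := int_ivt' (fun n => walk ξ n ω) hstep z n2 n1 h hz1 hz2
    exact ⟨k, by omega, hk3⟩
  · obtain ⟨k, hk1, _, hk3⟩ := int_ivt (fun n => walk ξ n ω) hstep z n1 n2 h hz2 hz1
    exact ⟨k, by omega, hk3⟩

end Hitting

section Bits

variable {P : Measure Ω} {ξ : ℕ → Ω → ℤ}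

/-- The `k`-th fair bit extracted from the walk. -/
def bit (ξ : ℕ → Ω → ℤ) (k : ℕ) (ω : Ω) : ℕ := if ξ k ω = 1 then 1 else 0

/-- Integer formed by the first `n` bits. -/
def Wn (ξ : ℕ → Ω → ℤ) (n : ℕ) (ω : Ω) : ℕ :=
  ∑ k ∈ Finset.range n, bit ξ (k + 1) ω * 2 ^ (n - 1 - k)

/-- Truncated binary expansion. -/
def Vn (ξ : ℕ → Ω → ℤ) (n : ℕ) (ω : Ω) : ℝ :=
  ∑ k ∈ Finset.range n, (bit ξ (k + 1) ω : ℝ) / 2 ^ (k + 1)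

/-- The uniform random variable built from the bits. -/
def Ufun (ξ : ℕ → Ω → ℤ) (ω : Ω) : ℝ :=
  ∑' k : ℕ, (bit ξ (k + 1) ω : ℝ) / 2 ^ (k + 1)

lemma bit_le_one (k : ℕ) (ω : Ω) : bit ξ k ω ≤ 1 := by
  unfold bit; split <;> simp

lemma summable_half_pow_succ : Summable (fun i : ℕ => (1/2:ℝ)^(i+1)) :=
  summable_geometric_two.comp_injective (add_left_injective 1)

lemma term_le (ω : Ω) (k : ℕ) : (bit ξ (k + 1) ω : ℝ) / 2 ^ (k + 1) ≤ (1/2:ℝ)^(k+1) := by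
  have hb : (bit ξ (k+1) ω : ℝ) ≤ 1 := by exact_mod_cast bit_le_one (k+1) ω
  have h2 : ((1:ℝ)/2)^(k+1) = 1 / 2^(k+1) := by rw [div_pow, one_pow]
  rw [h2]
  exact div_le_div_of_nonneg_right hb (by positivity) |>.trans_eq rfl

lemma summable_bits (ω : Ω) : Summable fun k : ℕ => (bit ξ (k + 1) ω : ℝ) / 2 ^ (k + 1) :=
  Summable.of_nonneg_of_le (fun k => by positivity) (term_le ω) summable_half_pow_succ

/-- Tail bound for series dominated by the geometric series. -/
lemma tail_bound (f : ℕ → ℝ) (h0 : ∀ i, 0 ≤ f i) (h1 : ∀ i, f i ≤ (1/2:ℝ)^(i+1)) (n : ℕ) :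
    ∑' i, f i ≤ (∑ i ∈ Finset.range n, f i) + (1/2)^n := by
  have hsum : Summable f := Summable.of_nonneg_of_le h0 h1 summable_half_pow_succ
  rw [← Summable.sum_add_tsum_nat_add n hsum]
  refine add_le_add le_rfl ?_
  have hs2 : Summable (fun i : ℕ => (1/2:ℝ)^(i+n+1)) :=
    (summable_nat_add_iff (f := fun i => (1/2:ℝ)^(i+1)) n).mpr summable_half_pow_succ
  have step1 : (∑' i, f (i+n)) ≤ ∑' i : ℕ, (1/2:ℝ)^(i+n+1) :=
     Summable.tsum_le_tsum (fun i => h1 (i+n)) ((summable_nat_add_iff (f := f) n).mpr hsum) hs2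
  have step2 : (∑' i : ℕ, (1/2:ℝ)^(i+n+1)) = ∑' i : ℕ, (1/2:ℝ)^(n+1) * (1/2)^i := by
    congr 1; funext i
    rw [show i+n+1 = (n+1)+i by ring, pow_add]
  have step3 : (∑' i : ℕ, (1/2:ℝ)^(n+1) * (1/2)^i) = (1/2:ℝ)^(n+1) * 2 := by
    rw [tsum_mul_left, tsum_geometric_two]
  have step4 : ((1:ℝ)/2)^(n+1) * 2 = (1/2)^n := by rw [pow_succ]; ring
  calc (∑' i, f (i+n)) ≤ ∑' i : ℕ, (1/2:ℝ)^(i+n+1) := step1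
    _ = (1/2:ℝ)^n := by rw [step2, step3, step4]

lemma Vn_le_U (n : ℕ) (ω : Ω) : Vn ξ n ω ≤ Ufun ξ ω :=
  Summable.sum_le_tsum (Finset.range n) (fun k _ => by positivity) (summable_bits ω)

lemma U_le_Vn (n : ℕ) (ω : Ω) : Ufun ξ ω ≤ Vn ξ n ω + (1/2) ^ n :=
  tail_bound _ (fun i => by positivity) (term_le ω) n

lemma U_nonneg (ω : Ω) : 0 ≤ Ufun ξ ω :=
  tsum_nonneg fun k => by positivity

lemma U_le_one (ω : Ω) : Ufun ξ ω ≤ 1 := by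
  have := U_le_Vn (ξ := ξ) 0 ω
  simpa [Vn] using this

lemma measurable_Vn (hm : ∀ k, Measurable (ξ k)) (n : ℕ) : Measurable (Vn ξ n) := by
  refine Finset.measurable_sum _ fun k _ => ?_
  exact (measurable_from_top
    (f := fun z : ℤ => ((if z = 1 then 1 else 0 : ℕ) : ℝ) / 2 ^ (k+1))).comp (hm (k+1))

lemma measurable_U (hm : ∀ k, Measurable (ξ k)) : Measurable (Ufun ξ) := by
  refine measurable_of_tendsto_metrizable (measurable_Vn hm) ?_
  rw [tendsto_pi_nhds]
  intro ω
  rw [tendsto_iff_dist_tendsto_zero]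
  refine squeeze_zero (fun n => dist_nonneg) (fun n => ?_)
    (tendsto_pow_atTop_nhds_zero_of_lt_one (by norm_num) (by norm_num : (1/2:ℝ) < 1))
  rw [Real.dist_eq, abs_sub_comm, abs_of_nonneg (by linarith [Vn_le_U (ξ := ξ) n ω])]
  linarith [U_le_Vn (ξ := ξ) n ω]

end Bits

section Dist

variable {P : Measure Ω} {ξ : ℕ → Ω → ℤ}

lemma Wn_succ (n : ℕ) (ω : Ω) :
    Wn ξ (n + 1) ω = 2 * Wn ξ n ω + bit ξ (n + 1) ω := by
  rw [Wn, Finset.sum_range_succ, Wn, Finset.mul_sum]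
  have h1 : ∀ k ∈ Finset.range n, bit ξ (k+1) ω * 2 ^ (n + 1 - 1 - k)
      = 2 * (bit ξ (k+1) ω * 2 ^ (n - 1 - k)) := by
    intro k hk
    simp only [Finset.mem_range] at hk
    rw [show n + 1 - 1 - k = (n - 1 - k) + 1 by omega, pow_succ]
    ring
  rw [Finset.sum_congr rfl h1]
  simp [Nat.sub_self]

lemma Wn_lt (n : ℕ) (ω : Ω) : Wn ξ n ω < 2 ^ n := by
  induction n with
  | zero => simp [Wn]
  | succ n ih =>
    have hb := bit_le_one (ξ := ξ) (n+1) ω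
    rw [Wn_succ]
    have : 2 ^ (n+1) = 2 * 2^n := by rw [pow_succ]; ring
    omega

lemma Vn_eq (n : ℕ) (ω : Ω) : Vn ξ n ω = (Wn ξ n ω : ℝ) / 2 ^ n := by
  rw [Vn, Wn, Nat.cast_sum, Finset.sum_div]
  refine Finset.sum_congr rfl fun k hk => ?_
  simp only [Finset.mem_range] at hk
  rw [Nat.cast_mul, Nat.cast_pow, Nat.cast_ofNat]
  rw [show (n:ℕ) = (k+1) + (n-1-k) by omega, pow_add]
  rw [show k + 1 + (n - 1 - k) - 1 - k = n - 1 - k by omega]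
  rw [pow_add]
  have h2 : ((2:ℝ))^(n-1-k) ≠ 0 := by positivity
  field_simp
  ring

lemma measurable_bit_comap (k : ℕ) :
    Measurable[MeasurableSpace.comap (ξ k) inferInstance] (bit ξ k) :=
  (measurable_from_top (f := fun z : ℤ => (if z = 1 then 1 else 0 : ℕ))).comp
    (Measurable.of_comap_le le_rfl)

lemma measurable_Wn_sup (n : ℕ) :
    Measurable[⨆ i ∈ Set.Iic n, MeasurableSpace.comap (ξ i) inferInstance] (Wn ξ n) := by
  refine Finset.measurable_sum _ fun k hk => ?_
  simp only [Finset.mem_range] at hk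
  refine Measurable.mul ?_ measurable_const
  refine (measurable_bit_comap (k+1)).mono ?_ le_rfl
  exact le_biSup (f := fun i => MeasurableSpace.comap (ξ i) inferInstance)
    (show k + 1 ∈ Set.Iic n from by simp only [Set.mem_Iic]; omega)

/-- The first `n` bits form a uniform integer in `[0, 2^n)`. -/
lemma Wn_dist (W : IsSSRW P ξ) : ∀ n, ∀ j < 2 ^ n, P {ω | Wn ξ n ω = j} = (2⁻¹ : ℝ≥0∞) ^ n := by
  haveI := W.isProb
  intro n
  induction n with
  | zero =>
    intro j hj
    have hj0 : j = 0 := by omega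
    subst hj0
    have : {ω : Ω | Wn ξ 0 ω = 0} = Set.univ := by
      ext ω; simp [Wn]
    rw [this, measure_univ]
    simp
  | succ n ih =>
    intro j hj
    have hev : {ω | Wn ξ (n+1) ω = j}
        = {ω | Wn ξ n ω = j / 2} ∩ {ω | bit ξ (n+1) ω = j % 2} := by
      ext ω
      simp only [Set.mem_setOf_eq, Set.mem_inter_iff, Wn_succ]
      have hb : bit ξ (n+1) ω = 0 ∨ bit ξ (n+1) ω = 1 := by
        unfold bit; split <;> simp
      omega
    have hind := indep_sup_step W n
    rw [Indep_iff] at hind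
    have hm1 : MeasurableSet[⨆ i ∈ Set.Iic n, MeasurableSpace.comap (ξ i) inferInstance]
        {ω | Wn ξ n ω = j / 2} :=
      measurable_Wn_sup n (measurableSet_singleton (j / 2))
    have hm2 : MeasurableSet[MeasurableSpace.comap (ξ (n+1)) inferInstance]
        {ω | bit ξ (n+1) ω = j % 2} :=
      measurable_bit_comap (n+1) (measurableSet_singleton (j % 2))
    rw [hev, hind _ _ hm1 hm2]
    have hhalf : P {ω | bit ξ (n+1) ω = j % 2} = 2⁻¹ := by
      rcases Nat.mod_two_eq_zero_or_one j with h | h <;> rw [h]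
      · have hs : {ω | bit ξ (n+1) ω = 0} = {ω | ξ (n+1) ω = 1}ᶜ := by
          ext ω
          simp only [Set.mem_setOf_eq, Set.mem_compl_iff, bit]
          split <;> simp_all
        have hms : MeasurableSet {ω | ξ (n+1) ω = 1} :=
          (W.meas (n+1)) (measurableSet_singleton 1)
        rw [hs, prob_compl_eq_one_sub hms, W.up]
        rw [one_div]
        exact ENNReal.one_sub_inv_two
      · have hs : {ω | bit ξ (n+1) ω = 1} = {ω | ξ (n+1) ω = 1} := by
          ext ω
          simp only [Set.mem_setOf_eq, bit]
          split <;> simp_all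
        rw [hs, W.up, one_div]
    have hdiv : j / 2 < 2 ^ n := by
      have : 2 ^ (n+1) = 2 * 2 ^ n := by rw [pow_succ]; ring
      omega
    rw [ih _ hdiv, hhalf, pow_succ]

/-- Counting version. -/
lemma Wn_count (W : IsSSRW P ξ) (n : ℕ) (S : Finset ℕ) (hS : ∀ j ∈ S, j < 2 ^ n) :
    P {ω | Wn ξ n ω ∈ S} = (S.card : ℝ≥0∞) * (2⁻¹ : ℝ≥0∞) ^ n := by
  haveI := W.isProb
  have hset : {ω : Ω | Wn ξ n ω ∈ S} = ⋃ j ∈ S, {ω | Wn ξ n ω = j} := by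
    ext ω; simp
  have hWmeas : Measurable (Wn ξ n) := by
    refine Finset.measurable_sum _ fun k _ => ?_
    exact ((measurable_from_top
      (f := fun z : ℤ => (if z = 1 then 1 else 0 : ℕ))).comp (W.meas (k+1))).mul measurable_const
  rw [hset, measure_biUnion_finset ?_ (fun j _ =>
    (show MeasurableSet {ω | Wn ξ n ω = j} from hWmeas (measurableSet_singleton j)))]
  · rw [Finset.sum_congr rfl (fun j hj => Wn_dist W n j (hS j hj)), Finset.sum_const,
      nsmul_eq_mul]
  · intro i _ j _ hij
    simp only [Function.onFun]
    rw [Set.disjoint_left]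
    intro ω h1 h2
    simp only [Set.mem_setOf_eq] at h1 h2
    omega

end Dist

section CDF

variable {P : Measure Ω} {ξ : ℕ → Ω → ℤ}

lemma toReal_card_pow (c : ℕ) (n : ℕ) :
    (((c : ℝ≥0∞) * (2⁻¹ : ℝ≥0∞) ^ n)).toReal = (c : ℝ) * (1/2:ℝ)^n := by
  rw [ENNReal.toReal_mul, ENNReal.toReal_pow]
  simp

lemma pow_half_mul (n : ℕ) : (2:ℝ)^n * (1/2)^n = 1 := by
  rw [← mul_pow]; norm_num

lemma U_cdf (W : IsSSRW P ξ) {t : ℝ} (h0 : 0 ≤ t) (h1 : t ≤ 1) :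
    P {ω | Ufun ξ ω < t} = ENNReal.ofReal t := by
  haveI := W.isProb
  set p := (P {ω | Ufun ξ ω < t}).toReal with hp
  have hup : ∀ n : ℕ, p ≤ t + (1/2)^n := by
    intro n
    set S : Finset ℕ := (Finset.range (2^n)).filter (fun j => (j:ℝ) < t * 2^n) with hS
    have hsub : {ω | Ufun ξ ω < t} ⊆ {ω | Wn ξ n ω ∈ S} := by
      intro ω hω
      simp only [Set.mem_setOf_eq] at hω ⊢
      rw [hS, Finset.mem_filter, Finset.mem_range]
      refine ⟨Wn_lt n ω, ?_⟩
      have hv := Vn_le_U (ξ := ξ) n ω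
      rw [Vn_eq] at hv
      have hlt : (Wn ξ n ω : ℝ)/2^n < t := lt_of_le_of_lt hv hω
      rw [div_lt_iff₀ (by positivity)] at hlt
      linarith
    have hm := measure_mono (μ := P) hsub
    rw [Wn_count W n S (fun j hj => by
      rw [hS] at hj
      simp only [Finset.mem_filter, Finset.mem_range] at hj
      exact hj.1)] at hm
    have hcard : (S.card : ℝ) ≤ t * 2^n + 1 := by
      have hsub2 : S ⊆ Finset.range (Nat.ceil (t * 2^n)) := by
        intro j hj
        rw [hS] at hj
        simp only [Finset.mem_filter, Finset.mem_range] at hj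
        rw [Finset.mem_range]
        exact Nat.lt_ceil.mpr hj.2
      have hcc := Finset.card_le_card hsub2
      rw [Finset.card_range] at hcc
      have hceil : (Nat.ceil (t * 2^n) : ℝ) < t*2^n + 1 := Nat.ceil_lt_add_one (by positivity)
      calc (S.card : ℝ) ≤ (Nat.ceil (t*2^n) : ℝ) := by exact_mod_cast hcc
        _ ≤ t*2^n + 1 := hceil.le
    have htr : p ≤ (S.card : ℝ) * (1/2:ℝ)^n := by
      rw [hp, ← toReal_card_pow]
      exact ENNReal.toReal_mono (by
        refine ENNReal.mul_ne_top (by simp) ?_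
        exact ENNReal.pow_ne_top (by simp)) hm
    have hpow := pow_half_mul n
    have hfin : (S.card : ℝ) * (1/2:ℝ)^n ≤ t + (1/2)^n := by
      have hmul := mul_le_mul_of_nonneg_right hcard (by positivity : (0:ℝ) ≤ (1/2:ℝ)^n)
      nlinarith [hmul]
    linarith
  have hlo : ∀ n : ℕ, t - 3*(1/2)^n ≤ p := by
    intro n
    set S : Finset ℕ := (Finset.range (2^n)).filter (fun j => (j:ℝ) + 1 < t * 2^n) with hS
    have hsub : {ω | Wn ξ n ω ∈ S} ⊆ {ω | Ufun ξ ω < t} := by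
      intro ω hω
      simp only [Set.mem_setOf_eq] at hω ⊢
      rw [hS, Finset.mem_filter, Finset.mem_range] at hω
      have hu := U_le_Vn (ξ := ξ) n ω
      rw [Vn_eq] at hu
      have h2 : ((Wn ξ n ω : ℝ) + 1)/2^n < t := by
        rw [div_lt_iff₀ (by positivity)]
        linarith [hω.2]
      have h3 : (Wn ξ n ω : ℝ)/2^n + (1/2:ℝ)^n = ((Wn ξ n ω : ℝ) + 1)/2^n := by
        rw [show ((1:ℝ)/2)^n = 1/2^n by rw [div_pow, one_pow], ← add_div]
      linarith
    have hm := measure_mono (μ := P) hsub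
    rw [Wn_count W n S (fun j hj => by
      rw [hS] at hj
      simp only [Finset.mem_filter, Finset.mem_range] at hj
      exact hj.1)] at hm
    set K := Nat.floor (t * 2^n) with hK
    have hK2 : K ≤ 2^n := by
      refine Nat.floor_le_of_le ?_
      push_cast
      nlinarith [pow_pos (by norm_num : (0:ℝ) < 2) n]
    have hKle : (K : ℝ) ≤ t * 2^n := Nat.floor_le (by positivity)
    have hKgt : t * 2^n < (K : ℝ) + 1 := Nat.lt_floor_add_one _
    have hsub2 : Finset.range (K - 2) ⊆ S := by
      intro j hj
      rw [Finset.mem_range] at hj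
      rw [hS, Finset.mem_filter, Finset.mem_range]
      constructor
      · omega
      · have hj3 : (j : ℝ) + 3 ≤ (K : ℝ) := by exact_mod_cast (by omega : j + 3 ≤ K)
        linarith
    have hcard : (K : ℝ) - 2 ≤ (S.card : ℝ) := by
      have hcc := Finset.card_le_card hsub2
      rw [Finset.card_range] at hcc
      rcases le_or_gt 2 K with h | h
      · have : ((K - 2 : ℕ) : ℝ) = (K:ℝ) - 2 := by
          push_cast [Nat.cast_sub h]
          ring
        rw [← this]
        exact_mod_cast hcc
      · have : (K:ℝ) ≤ 1 := by exact_mod_cast (by omega : K ≤ 1)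
        have : (0:ℝ) ≤ (S.card : ℝ) := by positivity
        linarith
    have htr : (S.card : ℝ) * (1/2:ℝ)^n ≤ p := by
      rw [hp, ← toReal_card_pow]
      refine ENNReal.toReal_mono (measure_ne_top P _) hm
    have hpow := pow_half_mul n
    have h5 : (t * 2^n - 3) * (1/2:ℝ)^n ≤ (S.card : ℝ) * (1/2:ℝ)^n := by
      refine mul_le_mul_of_nonneg_right ?_ (by positivity)
      linarith
    nlinarith [h5, htr]
  have htend1 : Tendsto (fun n : ℕ => t + (1/2:ℝ)^n) atTop (𝓝 t) := by
    have := tendsto_const_nhds (x := t) (f := atTop (α := ℕ)) |>.add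
      (tendsto_pow_atTop_nhds_zero_of_lt_one (by norm_num : (0:ℝ) ≤ 1/2) (by norm_num))
    simpa using this
  have htend2 : Tendsto (fun n : ℕ => t - 3*(1/2:ℝ)^n) atTop (𝓝 t) := by
    have := tendsto_const_nhds (x := t) (f := atTop (α := ℕ)) |>.sub
      ((tendsto_pow_atTop_nhds_zero_of_lt_one (by norm_num : (0:ℝ) ≤ 1/2)
        (by norm_num)).const_mul 3)
    simpa using this
  have hple : p ≤ t := ge_of_tendsto' htend1 hup
  have htlep : t ≤ p := le_of_tendsto' htend2 hlo
  have hpt : p = t := le_antisymm hple htlep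
  rw [← ENNReal.ofReal_toReal (measure_ne_top P {ω | Ufun ξ ω < t}), ← hp, hpt]

end CDF

section Law

variable {P : Measure Ω} {ξ : ℕ → Ω → ℤ}

lemma U_interval (W : IsSSRW P ξ) {a b : ℝ} (h0 : 0 ≤ a) (hab : a ≤ b) (h1 : b ≤ 1) :
    P {ω | Ufun ξ ω ∈ Set.Ico a b} = ENNReal.ofReal (b - a) := by
  haveI := W.isProb
  have hma : MeasurableSet {ω | Ufun ξ ω < a} :=
    measurableSet_lt (measurable_U W.meas) measurable_const
  have hset : {ω | Ufun ξ ω ∈ Set.Ico a b} = {ω | Ufun ξ ω < b} \ {ω | Ufun ξ ω < a} := by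
    ext ω
    simp only [Set.mem_setOf_eq, Set.mem_Ico, Set.mem_diff, not_lt]
    tauto
  rw [hset, measure_diff
    (show {ω | Ufun ξ ω < a} ⊆ {ω | Ufun ξ ω < b} from fun ω h => lt_of_lt_of_le h hab)
    hma.nullMeasurableSet (measure_ne_top P _),
    U_cdf W (h0.trans hab) h1, U_cdf W h0 (hab.trans h1)]
  exact (ENNReal.ofReal_sub b h0).symm

lemma U_point (W : IsSSRW P ξ) {t : ℝ} (h0 : 0 ≤ t) (h1 : t ≤ 1) :
    P {ω | Ufun ξ ω = t} = 0 := by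
  haveI := W.isProb
  rcases lt_or_eq_of_le h1 with hlt | heq
  · have hbound : ∀ n : ℕ, P {ω | Ufun ξ ω = t} ≤ ENNReal.ofReal ((1-t)/(n+1)) := by
      intro n
      have hd : (0:ℝ) < (1-t)/(n+1) := div_pos (by linarith) (by positivity)
      have hsub : {ω | Ufun ξ ω = t} ⊆ {ω | Ufun ξ ω ∈ Set.Ico t (t + (1-t)/(n+1))} := by
        intro ω hω
        simp only [Set.mem_setOf_eq] at hω
        simp only [Set.mem_setOf_eq, Set.mem_Ico, hω]
        constructor <;> [exact le_rfl; linarith]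
      have hm := measure_mono (μ := P) hsub
      have hb1 : t + (1-t)/(n+1) ≤ 1 := by
        have : (1-t)/(n+1) ≤ (1-t)/1 := by
          apply div_le_div_of_nonneg_left (by linarith) (by norm_num) ?_
          · push_cast; linarith [Nat.cast_nonneg (α := ℝ) n]
        linarith
      rw [U_interval W h0 (by linarith) hb1] at hm
      simpa using hm
    refine le_antisymm ?_ zero_le
    have htend : Tendsto (fun n : ℕ => ENNReal.ofReal ((1-t)/(n+1))) atTop (𝓝 0) := by
      rw [show (0:ℝ≥0∞) = ENNReal.ofReal 0 by simp]
      refine ENNReal.tendsto_ofReal ?_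
      have := tendsto_one_div_add_atTop_nhds_zero_nat.const_mul (1-t)
      simpa [div_eq_mul_inv] using this
    exact ge_of_tendsto' htend hbound
  · subst heq
    have hset : {ω | Ufun ξ ω = 1} = {ω | Ufun ξ ω < 1}ᶜ := by
      ext ω
      simp only [Set.mem_setOf_eq, Set.mem_compl_iff, not_lt]
      constructor
      · intro h; rw [h]
      · intro h; exact le_antisymm (U_le_one ω) h
    rw [hset, prob_compl_eq_one_sub (measurableSet_lt (measurable_U W.meas) measurable_const),
      U_cdf W (by norm_num) le_rfl]
    simp

/-- Fixed enumeration of `ℤ`. -/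
def enumZ : ℕ ≃ ℤ := (Denumerable.eqv ℤ).symm

/-- Point masses of `μ` along the enumeration. -/
def qseq (μ : Measure ℤ) (j : ℕ) : ℝ≥0∞ := μ {enumZ j}

/-- Cumulative distribution along the enumeration. -/
def cseq (μ : Measure ℤ) (j : ℕ) : ℝ := ∑ i ∈ Finset.range j, (qseq μ i).toReal

/-- Index selector: the unique `j` with `cseq μ j ≤ u < cseq μ (j+1)`. -/
def juf (μ : Measure ℤ) (u : ℝ) : ℕ := sInf {j | u < cseq μ (j+1)}

/-- The target random variable with law `μ`. -/
def targ (μ : Measure ℤ) (ξ : ℕ → Ω → ℤ) (ω : Ω) : ℤ := enumZ (juf μ (Ufun ξ ω))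

variable {μ : Measure ℤ}

lemma qseq_ne_top (hμ : IsProbabilityMeasure μ) (j : ℕ) : qseq μ j ≠ ⊤ :=
  measure_ne_top μ _

lemma cseq_mono : Monotone (cseq μ) := by
  refine monotone_nat_of_le_succ fun j => ?_
  rw [cseq, cseq, Finset.sum_range_succ]
  have : (0:ℝ) ≤ (qseq μ j).toReal := ENNReal.toReal_nonneg
  linarith

lemma cseq_nonneg (j : ℕ) : 0 ≤ cseq μ j :=
  Finset.sum_nonneg fun i _ => ENNReal.toReal_nonneg

lemma qseq_tsum (hμ : IsProbabilityMeasure μ) : ∑' j, qseq μ j = 1 := by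
  have huniv : (Set.univ : Set ℤ) = ⋃ j, {enumZ j} := by
    ext z
    simp only [Set.mem_univ, Set.mem_iUnion, Set.mem_singleton_iff, true_iff]
    exact ⟨enumZ.symm z, (enumZ.apply_symm_apply z).symm⟩
  have := measure_univ (μ := μ)
  rw [huniv, measure_iUnion ?_ (fun j => measurableSet_singleton _)] at this
  · exact this
  · intro i j hij
    simp only [Function.onFun, Set.disjoint_left, Set.mem_singleton_iff]
    intro z hz hz'
    exact hij (enumZ.injective (by rw [← hz, ← hz']))

lemma cseq_eq_toReal (hμ : IsProbabilityMeasure μ) (j : ℕ) :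
    cseq μ j = (∑ i ∈ Finset.range j, qseq μ i).toReal := by
  rw [ENNReal.toReal_sum (fun i _ => qseq_ne_top hμ i)]
  rfl

lemma cseq_le_one (hμ : IsProbabilityMeasure μ) (j : ℕ) : cseq μ j ≤ 1 := by
  rw [cseq_eq_toReal hμ]
  have hle : (∑ i ∈ Finset.range j, qseq μ i) ≤ 1 := by
    rw [← qseq_tsum hμ]
    exact ENNReal.sum_le_tsum _
  calc (∑ i ∈ Finset.range j, qseq μ i).toReal ≤ (1:ℝ≥0∞).toReal :=
        ENNReal.toReal_mono (by simp) hle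
    _ = 1 := by simp

lemma cseq_tendsto (hμ : IsProbabilityMeasure μ) : Tendsto (cseq μ) atTop (𝓝 1) := by
  have h1 : Tendsto (fun j => ∑ i ∈ Finset.range j, qseq μ i) atTop (𝓝 1) := by
    rw [← qseq_tsum hμ]
    exact ENNReal.tendsto_nat_tsum (qseq μ)
  have h2 := (ENNReal.tendsto_toReal (a := 1) (by simp)).comp h1
  simp only [Function.comp, Function.comp_def] at h2
  have h3 : (fun j => (∑ i ∈ Finset.range j, qseq μ i).toReal) = cseq μ := by
    funext j; exact (cseq_eq_toReal hμ j).symm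
  rw [h3] at h2
  simpa using h2

lemma cseq_exists (hμ : IsProbabilityMeasure μ) {u : ℝ} (hu : u < 1) :
    ∃ j, u < cseq μ (j+1) := by
  have := (cseq_tendsto hμ).eventually (eventually_gt_nhds hu)
  rw [eventually_atTop] at this
  obtain ⟨N, hN⟩ := this
  exact ⟨N, hN (N+1) (by omega)⟩

lemma juf_spec (hμ : IsProbabilityMeasure μ) {u : ℝ} (h0 : 0 ≤ u) (h1 : u < 1) :
    cseq μ (juf μ u) ≤ u ∧ u < cseq μ (juf μ u + 1) := by
  have hex : {j | u < cseq μ (j+1)}.Nonempty := cseq_exists hμ h1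
  constructor
  · rcases Nat.eq_zero_or_pos (juf μ u) with h | h
    · rw [h]
      simpa [cseq] using h0
    · obtain ⟨m, hm⟩ : ∃ m, juf μ u = m + 1 := ⟨juf μ u - 1, by omega⟩
      rw [hm]
      have hnm : m ∉ {j | u < cseq μ (j+1)} :=
        Nat.notMem_of_lt_sInf (show m < juf μ u by omega)
      exact not_lt.mp hnm
  · exact Nat.sInf_mem hex

lemma juf_unique (hμ : IsProbabilityMeasure μ) {u : ℝ} {j : ℕ} (h0 : 0 ≤ u)
    (hcj : cseq μ j ≤ u) (hcj1 : u < cseq μ (j+1)) : juf μ u = j := by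
  have h1 : u < 1 := lt_of_lt_of_le hcj1 (cseq_le_one hμ (j+1))
  obtain ⟨ha, hb⟩ := juf_spec hμ h0 h1
  rcases lt_trichotomy (juf μ u) j with h | h | h
  · have : juf μ u + 1 ≤ j := by omega
    exact absurd (lt_of_lt_of_le hb ((cseq_mono this).trans hcj)) (lt_irrefl u)
  · exact h
  · have : j + 1 ≤ juf μ u := by omega
    exact absurd (lt_of_lt_of_le hcj1 ((cseq_mono this).trans ha)) (lt_irrefl u)

lemma measurable_juf : Measurable (juf μ) := by
  refine measurable_to_countable' fun j => ?_
  have hset : juf μ ⁻¹' {j} =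
      ({u : ℝ | u < cseq μ (j+1)} ∩ ⋂ i ∈ Set.Iio j, {u : ℝ | u < cseq μ (i+1)}ᶜ)
      ∪ (if j = 0 then {u : ℝ | ∀ k, cseq μ (k+1) ≤ u} else ∅) := by
    ext u
    simp only [Set.mem_preimage, Set.mem_singleton_iff, Set.mem_union, Set.mem_inter_iff,
      Set.mem_setOf_eq, Set.mem_iInter, Set.mem_compl_iff, Set.mem_Iio]
    by_cases hex : {k : ℕ | u < cseq μ (k+1)}.Nonempty
    · constructor
      · intro hju
        left
        constructor
        · have := Nat.sInf_mem hex
          rw [show sInf {k : ℕ | u < cseq μ (k+1)} = juf μ u from rfl, hju] at this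
          exact this
        · intro i hi
          have hnm : i ∉ {k : ℕ | u < cseq μ (k+1)} := by
            refine Nat.notMem_of_lt_sInf ?_
            show i < juf μ u
            omega
          exact hnm
      · rintro (⟨ha, hb⟩ | hbad)
        · refine le_antisymm (Nat.sInf_le ha) ?_
          by_contra hc
          push_neg at hc
          have hmem := Nat.sInf_mem hex
          exact (hb _ hc) hmem
        · rcases Nat.eq_zero_or_pos j with hj | hj
          · simp only [hj, if_true, Set.mem_setOf_eq] at hbad
            obtain ⟨k, hk⟩ := hex
            exact absurd hk (not_lt.mpr (hbad k))
          · simp only [if_neg (by omega : ¬ j = 0)] at hbad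
            exact absurd hbad (Set.notMem_empty u)
    · rw [Set.not_nonempty_iff_eq_empty] at hex
      have hju : juf μ u = 0 := by rw [juf, hex, Nat.sInf_empty]
      have hax : ∀ k : ℕ, cseq μ (k+1) ≤ u := by
        intro k
        by_contra hc
        push_neg at hc
        have : k ∈ {k : ℕ | u < cseq μ (k+1)} := hc
        rw [hex] at this
        exact this
      constructor
      · intro h
        rw [hju] at h
        subst h
        simp only [if_true]
        exact Or.inr hax
      · rintro (⟨ha, _⟩ | hbad)
        · exact absurd ha (not_lt.mpr (hax j))
        · rcases Nat.eq_zero_or_pos j with hj | hj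
          · omega
          · simp only [if_neg (by omega : ¬ j = 0)] at hbad
            exact absurd hbad (Set.notMem_empty u)
  rw [hset]
  refine MeasurableSet.union ?_ ?_
  · refine (measurableSet_Iio).inter ?_
    exact MeasurableSet.biInter (Set.to_countable _) fun i _ => measurableSet_Iio.compl
  · split
    · have : {u : ℝ | ∀ k, cseq μ (k+1) ≤ u} = ⋂ k, {u : ℝ | cseq μ (k+1) ≤ u} := by
        ext u; simp
      rw [this]
      exact MeasurableSet.iInter fun k => measurableSet_le measurable_const measurable_id
    · exact MeasurableSet.empty

lemma measurable_targ (hm : ∀ k, Measurable (ξ k)) : Measurable (targ μ ξ) :=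
  measurable_from_top.comp (measurable_juf.comp (measurable_U hm))

lemma targ_law (W : IsSSRW P ξ) (hμ : IsProbabilityMeasure μ) :
    Measure.map (targ μ ξ) P = μ := by
  haveI := W.isProb
  refine Measure.ext_of_singleton fun z => ?_
  rw [Measure.map_apply (measurable_targ W.meas) (measurableSet_singleton z)]
  set j := enumZ.symm z with hj
  have hz : enumZ j = z := enumZ.apply_symm_apply z
  have hpre : targ μ ξ ⁻¹' {z} = {ω | juf μ (Ufun ξ ω) = j} := by
    ext ω
    simp only [Set.mem_preimage, Set.mem_singleton_iff, targ, Set.mem_setOf_eq]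
    constructor
    · intro h; exact enumZ.injective (by rw [h, hz])
    · intro h; rw [h, hz]
  rw [hpre]
  set B : Set Ω := {ω | Ufun ξ ω ∈ Set.Ico (cseq μ j) (cseq μ (j+1))} with hB
  have hBsub : B ⊆ {ω | juf μ (Ufun ξ ω) = j} := by
    intro ω hω
    simp only [hB, Set.mem_setOf_eq, Set.mem_Ico] at hω
    exact juf_unique hμ (U_nonneg ω) hω.1 hω.2
  have hAsub : {ω | juf μ (Ufun ξ ω) = j} ⊆ B ∪ {ω | Ufun ξ ω = 1} := by
    intro ω hω
    simp only [Set.mem_setOf_eq] at hω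
    rcases lt_or_eq_of_le (U_le_one (ξ := ξ) ω) with h1 | h1
    · left
      obtain ⟨ha, hb⟩ := juf_spec hμ (U_nonneg ω) h1
      rw [hω] at ha hb
      exact ⟨ha, hb⟩
    · right; exact h1
  have hBP : P B = qseq μ j := by
    rw [hB, U_interval W (cseq_nonneg j) (cseq_mono (by omega : j ≤ j + 1)) (cseq_le_one hμ _)]
    have : cseq μ (j+1) - cseq μ j = (qseq μ j).toReal := by
      rw [cseq, cseq, Finset.sum_range_succ]; ring
    rw [this, ENNReal.ofReal_toReal (qseq_ne_top hμ j)]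
  have h1 : P {ω | juf μ (Ufun ξ ω) = j} ≤ P B := by
    calc P {ω | juf μ (Ufun ξ ω) = j} ≤ P (B ∪ {ω | Ufun ξ ω = 1}) := measure_mono hAsub
      _ ≤ P B + P {ω | Ufun ξ ω = 1} := measure_union_le _ _
      _ = P B := by rw [U_point W (by norm_num) le_rfl, add_zero]
  have h2 : P B ≤ P {ω | juf μ (Ufun ξ ω) = j} := measure_mono hBsub
  rw [le_antisymm h1 h2, hBP, qseq, hz]

end Law

section Assembly

variable {P : Measure Ω} {ξ : ℕ → Ω → ℤ}

lemma iInf_le_iff_exists (p : ℕ → Prop) (n : ℕ) :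
    (⨅ (k : ℕ) (_ : p k), (k : ℕ∞)) ≤ (n : ℕ∞) ↔ ∃ k ≤ n, p k := by
  constructor
  · intro h
    by_contra hc
    push_neg at hc
    have hge : ((n + 1 : ℕ) : ℕ∞) ≤ ⨅ (k : ℕ) (_ : p k), (k : ℕ∞) := by
      refine le_iInf fun k => le_iInf fun hk => ?_
      rcases le_or_gt k n with hkn | hkn
      · exact absurd hk (hc k hkn)
      · exact_mod_cast hkn
    have := hge.trans h
    have : n + 1 ≤ n := by exact_mod_cast this
    omega
  · rintro ⟨k, hk, hp⟩
    exact le_trans (iInf₂_le k hp) (by exact_mod_cast hk)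

lemma measurable_Vn_filt (hm : ∀ k, Measurable (ξ k)) (m : ℕ) :
    Measurable[natFilt ξ hm m] (Vn ξ m) := by
  refine Finset.measurable_sum _ fun k hk => ?_
  simp only [Finset.mem_range] at hk
  exact (measurable_from_top
    (f := fun z : ℤ => ((if z = 1 then 1 else 0 : ℕ) : ℝ) / 2 ^ (k+1))).comp
    (xi_meas_filt hm (by omega) (by omega))

lemma U_Ioo (W : IsSSRW P ξ) (hμ : IsProbabilityMeasure μ) (j : ℕ) :
    P {ω | Ufun ξ ω ∈ Set.Ioo (cseq μ j) (cseq μ (j+1))} = qseq μ j := by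
  haveI := W.isProb
  have hset : {ω | Ufun ξ ω ∈ Set.Ioo (cseq μ j) (cseq μ (j+1))}
      = {ω | Ufun ξ ω ∈ Set.Ico (cseq μ j) (cseq μ (j+1))} \ {ω | Ufun ξ ω = cseq μ j} := by
    ext ω
    simp only [Set.mem_setOf_eq, Set.mem_Ioo, Set.mem_Ico, Set.mem_diff]
    constructor
    · rintro ⟨h1, h2⟩; exact ⟨⟨h1.le, h2⟩, by intro h; rw [h] at h1; exact lt_irrefl _ h1⟩
    · rintro ⟨⟨h1, h2⟩, h3⟩; exact ⟨lt_of_le_of_ne h1 (fun h => h3 h.symm), h2⟩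
  rw [hset, measure_diff_null (U_point W (cseq_nonneg j) (cseq_le_one hμ j)),
    U_interval W (cseq_nonneg j) (cseq_mono (by omega : j ≤ j + 1)) (cseq_le_one hμ _)]
  have heq : cseq μ (j+1) - cseq μ j = (qseq μ j).toReal := by
    rw [cseq, cseq, Finset.sum_range_succ]; ring
  rw [heq, ENNReal.ofReal_toReal (qseq_ne_top hμ j)]

lemma ae_good (W : IsSSRW P ξ) (hμ : IsProbabilityMeasure μ) :
    ∀ᵐ ω ∂P, ∃ j, Ufun ξ ω ∈ Set.Ioo (cseq μ j) (cseq μ (j+1)) := by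
  haveI := W.isProb
  set G : Set Ω := ⋃ j, {ω | Ufun ξ ω ∈ Set.Ioo (cseq μ j) (cseq μ (j+1))} with hG
  have hGm : ∀ j, MeasurableSet {ω | Ufun ξ ω ∈ Set.Ioo (cseq μ j) (cseq μ (j+1))} :=
    fun j => (measurable_U W.meas) measurableSet_Ioo
  have hdisj : Pairwise (Function.onFun Disjoint
      fun j => {ω | Ufun ξ ω ∈ Set.Ioo (cseq μ j) (cseq μ (j+1))}) := by
    intro i j hij
    simp only [Function.onFun, Set.disjoint_left]
    intro ω h1 h2
    simp only [Set.mem_setOf_eq, Set.mem_Ioo] at h1 h2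
    rcases lt_or_gt_of_ne hij with h | h
    · have : i + 1 ≤ j := by omega
      exact absurd (h1.2.trans_le ((cseq_mono this).trans h2.1.le)) (lt_irrefl _)
    · have : j + 1 ≤ i := by omega
      exact absurd (h2.2.trans_le ((cseq_mono this).trans h1.1.le)) (lt_irrefl _)
  have hPG : P G = 1 := by
    rw [hG, measure_iUnion hdisj hGm]
    rw [tsum_congr (fun j => U_Ioo W hμ j)]
    exact qseq_tsum hμ
  have hcompl := prob_compl_eq_zero_iff (MeasurableSet.iUnion hGm) |>.mpr hPG
  filter_upwards [measure_eq_zero_iff_ae_notMem.mp hcompl] with ω hω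
  rw [Set.notMem_compl_iff] at hω
  simpa [hG, Set.mem_iUnion] using hω

theorem skorokhod_embedding_exists'
    (P : Measure Ω) (ξ : ℕ → Ω → ℤ)
    (W : IsSSRW P ξ) (μ : Measure ℤ) (hμ : IsProbabilityMeasure μ) :
    ∃ τ : Ω → ℕ∞, IsStop (natFilt ξ W.meas) τ ∧ AEFinite P τ ∧ Embeds P ξ τ μ := by
  classical
  haveI := W.isProb
  set F := natFilt ξ W.meas with hF
  set Ac : ℕ → ℕ → Set Ω := fun m j =>
    {ω | cseq μ j ≤ Vn ξ m ω ∧ Vn ξ m ω + (1/2)^m < cseq μ (j+1)} with hAc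
  set Q : ℕ → Ω → Prop := fun n ω =>
    ∃ m, m ≤ n ∧ ∃ j, ω ∈ Ac m j ∧ walk ξ n ω = enumZ j with hQ
  set τ : Ω → ℕ∞ := fun ω => ⨅ (n : ℕ) (_ : Q n ω), (n : ℕ∞) with hτ
  have hAcmeas : ∀ m j, MeasurableSet[F m] (Ac m j) := by
    intro m j
    have h1 : MeasurableSet[F m] {ω | cseq μ j ≤ Vn ξ m ω} :=
      measurableSet_le measurable_const (measurable_Vn_filt W.meas m)
    have h2 : MeasurableSet[F m] {ω | Vn ξ m ω + (1/2)^m < cseq μ (j+1)} :=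
      measurableSet_lt ((measurable_Vn_filt W.meas m).add_const _) measurable_const
    exact h1.inter h2
  -- a.s. finiteness
  have hfin : AEFinite P τ := by
    rw [AEFinite]
    filter_upwards [ae_good W hμ, recurrent W] with ω hgood hrec
    obtain ⟨j, hj⟩ := hgood
    rw [Set.mem_Ioo] at hj
    obtain ⟨hj1, hj2⟩ := hj
    have hpos : 0 < min (Ufun ξ ω - cseq μ j) (cseq μ (j+1) - Ufun ξ ω) := by
      simp only [lt_min_iff]
      constructor <;> linarith
    obtain ⟨m, hmlt⟩ := exists_pow_lt_of_lt_one hpos (by norm_num : (1/2:ℝ) < 1)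
    have hAcm : ω ∈ Ac m j := by
      simp only [hAc, Set.mem_setOf_eq]
      have hv1 := Vn_le_U (ξ := ξ) m ω
      have hv2 := U_le_Vn (ξ := ξ) m ω
      have hm1 : (1/2:ℝ)^m < Ufun ξ ω - cseq μ j := lt_of_lt_of_le hmlt (min_le_left _ _)
      have hm2 : (1/2:ℝ)^m < cseq μ (j+1) - Ufun ξ ω := lt_of_lt_of_le hmlt (min_le_right _ _)
      constructor <;> linarith
    obtain ⟨n, hn1, hn2⟩ := hrec m (enumZ j)
    have hQn : Q n ω := ⟨m, hn1, j, hAcm, hn2⟩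
    calc τ ω ≤ (n : ℕ∞) := iInf₂_le n hQn
      _ < ⊤ := by exact_mod_cast ENat.coe_lt_top n
  refine ⟨τ, ?_, hfin, ?_⟩
  · -- stopping time
    intro n
    have hset : {ω | τ ω ≤ (n : ℕ∞)}
        = ⋃ k ∈ Set.Iic n, ⋃ m ∈ Set.Iic k, ⋃ j : ℕ,
            (Ac m j ∩ {ω | walk ξ k ω = enumZ j}) := by
      ext ω
      simp only [Set.mem_setOf_eq, Set.mem_iUnion, Set.mem_Iic, Set.mem_inter_iff]
      rw [hτ, iInf_le_iff_exists (fun k => Q k ω) n]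
      constructor
      · rintro ⟨k, hk, m, hm, j, hAcj, hwalk⟩
        exact ⟨k, hk, m, hm, j, hAcj, hwalk⟩
      · rintro ⟨k, hk, m, hm, j, hAcj, hwalk⟩
        exact ⟨k, hk, m, hm, j, hAcj, hwalk⟩
    rw [hset]
    refine MeasurableSet.biUnion (Set.to_countable _) fun k hk => ?_
    refine MeasurableSet.biUnion (Set.to_countable _) fun m hm => ?_
    refine MeasurableSet.iUnion fun j => ?_
    simp only [Set.mem_Iic] at hk hm
    refine MeasurableSet.inter ?_ ?_
    · exact (F.mono (hm.trans hk)) _ (hAcmeas m j)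
    · exact (F.mono hk) _
        (show MeasurableSet[F k] {ω | walk ξ k ω = enumZ j} from
          (walk_meas_filt W.meas le_rfl) (measurableSet_singleton _))
  · -- the law
    have hptw : ∀ ω, τ ω < ⊤ → stopVal ξ τ ω = targ μ ξ ω := by
      intro ω hfinω
      have hex : ∃ n, Q n ω := by
        by_contra hc
        push_neg at hc
        have htop : τ ω = ⊤ := by
          rw [hτ]
          refine le_antisymm le_top ?_
          exact le_iInf fun n => le_iInf fun hQn => absurd hQn (hc n)
        rw [htop] at hfinω
        exact absurd hfinω (lt_irrefl ⊤)
      have hτval : τ ω = ((Nat.find hex : ℕ) : ℕ∞) := by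
        have h1 : τ ω ≤ ((Nat.find hex : ℕ) : ℕ∞) :=
          iInf₂_le (Nat.find hex) (Nat.find_spec hex)
        have h2 : ((Nat.find hex : ℕ) : ℕ∞) ≤ τ ω :=
          le_iInf fun k => le_iInf fun hk => by exact_mod_cast Nat.find_min' hex hk
        exact le_antisymm h1 h2
      obtain ⟨m, hm, j, hAcj, hwalk⟩ := Nat.find_spec hex
      simp only [hAc, Set.mem_setOf_eq] at hAcj
      have hU1 : cseq μ j ≤ Ufun ξ ω := le_trans hAcj.1 (Vn_le_U m ω)
      have hU2 : Ufun ξ ω < cseq μ (j+1) := lt_of_le_of_lt (U_le_Vn m ω) hAcj.2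
      have hjuf : juf μ (Ufun ξ ω) = j := juf_unique hμ (U_nonneg ω) hU1 hU2
      rw [stopVal, hτval, ENat.toNat_coe, hwalk, targ, hjuf]
    have hae : stopVal ξ τ =ᵐ[P] targ μ ξ := by
      filter_upwards [hfin] with ω hω using hptw ω hω
    rw [Embeds, Measure.map_congr hae, targ_law W hμ]

end Assembly

/-- For every probability measure `μ` on `ℤ` there is an a.s. finite
stopping time `τ` of the natural filtration of the simple symmetric random walk with
`X_τ ∼ μ`. -/
theorem skorokhod_embedding_exists
    {Ω : Type*} [MeasurableSpace Ω] (P : Measure Ω) (ξ : ℕ → Ω → ℤ)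
    (W : IsSSRW P ξ) (μ : Measure ℤ) (hμ : IsProbabilityMeasure μ) :
    ∃ τ : Ω → ℕ∞, IsStop (natFilt ξ W.meas) τ ∧ AEFinite P τ ∧ Embeds P ξ τ μ :=
  skorokhod_embedding_exists' P ξ W μ hμ

end RWSkorokhod
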